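/- If a topological group G admits a thin Følner sequence, then G is separable; in fact, if (F_n) is a thin Følner sequence then the countable set ⋃_{n∈ℕ} F_n F_n^{-1} is dense in G. -/

import Mathlib

open Filter Topology Pointwise

noncomputable section

variable {G : Type*} [Group G] [TopologicalSpace G] [IsTopologicalGroup G] [DecidableEq G]

/-- The `V`-matching number `𝔪_V(F,E)`: the maximal cardinality of a subset `M ⊆ F`
admitting an injection `φ : M → E` with `φ(x) ∈ Vx` for all `x ∈ M`. -/
def matchingNumber (V : Set G) (F E : Finset G) : ℕ :=
  sSup {k | ∃ M : Finset G, M ⊆ F ∧ M.card = k ∧ ∃ φ : G → G,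
    Set.InjOn φ M ∧ ∀ x ∈ M, φ x ∈ E ∧ ∃ v ∈ V, φ x = v * x}

/-- A thin Følner sequence: finite non-empty subsets `F_n` with
`𝔪_V(F_n, gF_n)/|F_n| → 1` for every `g ∈ G` and every open neighbourhood `V` of the
identity. -/
def IsThinFolner (F : ℕ → Finset G) : Prop :=
  (∀ n, (F n).Nonempty) ∧
  ∀ (g : G) (V : Set G), IsOpen V → (1 : G) ∈ V →
    Tendsto (fun n => (matchingNumber V (F n) ((F n).image (g * ·)) : ℝ) / (F n).card)
      atTop (𝓝 1)

/-- If a topological group admits a thin Følner sequence `(F_n)`, then it is separable;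
in fact the countable set `⋃_n F_n F_n⁻¹` is dense. -/
theorem separable_of_thinFolner (F : ℕ → Finset G) (hF : IsThinFolner F) :
    (⋃ n, ((F n : Set G) * (F n : Set G)⁻¹)).Countable ∧
    Dense (⋃ n, ((F n : Set G) * (F n : Set G)⁻¹)) ∧
    TopologicalSpace.SeparableSpace G := by
  obtain ⟨hne, hconv⟩ := hF
  have hcnt : (⋃ n, ((F n : Set G) * (F n : Set G)⁻¹)).Countable :=
    Set.countable_iUnion fun n =>
      (((F n).finite_toSet.mul (F n).finite_toSet.inv)).countable
  have hdense : Dense (⋃ n, ((F n : Set G) * (F n : Set G)⁻¹)) := by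
    rw [dense_iff_inter_open]
    rintro W hW ⟨w, hw⟩
    set V : Set G := (fun v => w * v) ⁻¹' W with hVdef
    have hVopen : IsOpen V := hW.preimage (continuous_mul_left w)
    have hV1 : (1 : G) ∈ V := by simpa [hVdef] using hw
    have htend := hconv w⁻¹ V hVopen hV1
    have h2 : ∀ᶠ n in atTop,
        (1/2 : ℝ) < (matchingNumber V (F n) ((F n).image (w⁻¹ * ·)) : ℝ) / (F n).card :=
      htend.eventually (eventually_gt_nhds (by norm_num))
    obtain ⟨n, hn⟩ := h2.exists
    have hm : 0 < matchingNumber V (F n) ((F n).image (w⁻¹ * ·)) := by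
      by_contra h
      push_neg at h
      interval_cases hmn : matchingNumber V (F n) ((F n).image (w⁻¹ * ·))
      norm_num at hn
    -- the set defining matchingNumber
    set S : Set ℕ := {k | ∃ M : Finset G, M ⊆ F n ∧ M.card = k ∧ ∃ φ : G → G,
      Set.InjOn φ M ∧ ∀ x ∈ M, φ x ∈ (F n).image (w⁻¹ * ·) ∧ ∃ v ∈ V, φ x = v * x} with hSdef
    have hS0 : 0 ∈ S := ⟨∅, by simp, by simp, id, by simp [Set.InjOn], by simp⟩
    have hSbdd : BddAbove S := by
      refine ⟨(F n).card, fun k hk => ?_⟩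
      obtain ⟨M, hMsub, hMcard, _⟩ := hk
      exact hMcard ▸ Finset.card_le_card hMsub
    have hmem : matchingNumber V (F n) ((F n).image (w⁻¹ * ·)) ∈ S :=
      Nat.sSup_mem ⟨0, hS0⟩ hSbdd
    obtain ⟨M, hMsub, hMcard, φ, hφinj, hφ⟩ := hmem
    have hMne : M.Nonempty := by
      rw [← Finset.card_pos, hMcard]; exact hm
    obtain ⟨x, hx⟩ := hMne
    obtain ⟨hφxE, v, hvV, hφx⟩ := hφ x hx
    obtain ⟨y, hy, hyx⟩ := Finset.mem_image.mp hφxE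
    -- φ x = w⁻¹ * y = v * x, so y * x⁻¹ = w * v ∈ W
    have hkey : y * x⁻¹ = w * v := by
      have : w⁻¹ * y = v * x := by rw [hyx, hφx]
      have : y = w * (v * x) := by rw [← this]; group
      rw [this]; group
    refine ⟨y * x⁻¹, ?_, ?_⟩
    · rw [hkey]; exact hvV
    · exact Set.mem_iUnion.mpr ⟨n, Set.mul_mem_mul hy (Set.inv_mem_inv.mpr (hMsub hx))⟩
  exact ⟨hcnt, hdense, ⟨⟨_, hcnt, hdense⟩⟩⟩

end
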